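/- Let ρ > 0, let f : [0,ρ] → ℝ be continuous, and for z in the open ball B_ρ(0) ⊂ ℝⁿ set v(z) := f(ρ − |z|). Fix z₀ ∈ B_ρ(0) with z₀ ≠ 0, and let ψ be a C¹ function that touches v from below at z₀ (i.e., ψ(z₀) = v(z₀) and ψ ≤ v in a neighborhood of z₀). Then the subdifferential D⁻f(ρ − |z₀|) is nonempty and ∇ψ(z₀) = α·z₀/|z₀| for some α with −α ∈ D⁻f(ρ − |z₀|). -/

import Mathlib

open scoped InnerProductSpace
open Metric Set Filter

noncomputable section

abbrev En (n : ℕ) := EuclideanSpace ℝ (Fin n)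

variable {n : ℕ}

/-- Distance from the boundary of `Ω`. -/
noncomputable def dBd (Ω : Set (En n)) (x : En n) : ℝ := Metric.infDist x (frontier Ω)

/-- The inradius `ρ_Ω := max_{closure Ω} d_∂Ω`. -/
noncomputable def rhoΩ (Ω : Set (En n)) : ℝ := sSup (dBd Ω '' closure Ω)

/-- The singular set `Σ(Ω)`: points of `Ω` where `d_∂Ω` is not differentiable. -/
def SingSet (Ω : Set (En n)) : Set (En n) := {x ∈ Ω | ¬ DifferentiableAt ℝ (dBd Ω) x}

/-- The cut locus: the closure of the singular set. -/
def cutLocus (Ω : Set (En n)) : Set (En n) := closure (SingSet Ω)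

/-- The high ridge: points of `closure Ω` where `d_∂Ω` attains its maximum `ρ_Ω`. -/
def highRidge (Ω : Set (En n)) : Set (En n) := {x ∈ closure Ω | dBd Ω x = rhoΩ Ω}

noncomputable def c₀ : ℝ := 3 ^ ((4 : ℝ) / 3) / 4

/-- The candidate web solution `φ_Ω`. -/
noncomputable def phiΩ (Ω : Set (En n)) (x : En n) : ℝ :=
  c₀ * (rhoΩ Ω ^ ((4 : ℝ) / 3) - (rhoΩ Ω - dBd Ω x) ^ ((4 : ℝ) / 3))

/-- The infinity Laplacian `⟨D²φ(x)∇φ(x), ∇φ(x)⟩` of a smooth function. -/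
noncomputable def infLap (φ : En n → ℝ) (x : En n) : ℝ :=
  ⟪(fderiv ℝ (gradient φ) x) (gradient φ x), gradient φ x⟫_ℝ

/-- Viscosity subsolution of `-Δ_∞ u = 1` on an open set `A`. -/
def IsViscSubsol (A : Set (En n)) (u : En n → ℝ) : Prop :=
  ∀ φ : En n → ℝ, ContDiffOn ℝ 2 φ A → ∀ x₀ ∈ A,
    IsLocalMin (φ - u) x₀ → -infLap φ x₀ ≤ 1

/-- Viscosity supersolution of `-Δ_∞ u = 1` on an open set `A`. -/
def IsViscSupersol (A : Set (En n)) (u : En n → ℝ) : Prop :=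
  ∀ φ : En n → ℝ, ContDiffOn ℝ 2 φ A → ∀ x₀ ∈ A,
    IsLocalMax (φ - u) x₀ → 1 ≤ -infLap φ x₀

/-- Viscosity solution of `-Δ_∞ u = 1` on an open set `A`. -/
def IsViscSol (A : Set (En n)) (u : En n → ℝ) : Prop :=
  ContinuousOn u A ∧ IsViscSubsol A u ∧ IsViscSupersol A u

/-- Viscosity solution of the Dirichlet problem `-Δ_∞ u = 1` in `Ω`, `u = 0` on `∂Ω`. -/
def IsDirichletSol (Ω : Set (En n)) (u : En n → ℝ) : Prop :=
  ContinuousOn u (closure Ω) ∧ (∀ x ∈ frontier Ω, u x = 0) ∧ IsViscSol Ω u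

/-- `u` is a web function on `Ω`: it depends only on the distance from the boundary. -/
def IsWebOn (Ω : Set (En n)) (u : En n → ℝ) : Prop :=
  ∃ f : ℝ → ℝ, ContinuousOn f (Set.Icc 0 (rhoΩ Ω)) ∧ ∀ x ∈ closure Ω, u x = f (dBd Ω x)

/-- Fréchet superdifferential of `u` at `x`. -/
def superDiff (u : En n → ℝ) (x : En n) : Set (En n) :=
  {p | ∀ ε > 0, ∀ᶠ y in nhds x, u y - u x - ⟪p, y - x⟫_ℝ ≤ ε * ‖y - x‖}

/-- Set of reachable gradients `D*u(x)`. -/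
def reachGrad (u : En n → ℝ) (x : En n) : Set (En n) :=
  {p | ∃ xs : ℕ → En n, (∀ h, xs h ≠ x) ∧ (∀ h, DifferentiableAt ℝ u (xs h)) ∧
    Filter.Tendsto xs Filter.atTop (nhds x) ∧
    Filter.Tendsto (fun h => gradient u (xs h)) Filter.atTop (nhds p)}

/-- The set of projections of `x` onto a closed set `S`. -/
def projSet (S : Set (En n)) (x : En n) : Set (En n) :=
  {y ∈ S | dist x y = Metric.infDist x S}

end
/-- Fréchet subdifferential of `f : [0,ρ] → ℝ` at `t`. -/
def subDiff1 (f : ℝ → ℝ) (ρ t : ℝ) : Set ℝ :=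
  {q | ∀ ε > (0 : ℝ), ∀ᶠ s in nhdsWithin t (Set.Icc 0 ρ),
    -(ε * |s - t|) ≤ f s - f t - q * (s - t)}

/-- If a `C¹` function `ψ` touches `v(z) = f(ρ - |z|)` from below at
`z₀ ≠ 0`, then `D⁻f(ρ - |z₀|) ≠ ∅` and `∇ψ(z₀) = α z₀/|z₀|` with `-α ∈ D⁻f(ρ - |z₀|)`. -/
theorem touching_from_below_radial {n : ℕ} (ρ : ℝ) (hρ : 0 < ρ) (f : ℝ → ℝ)
    (hf : ContinuousOn f (Set.Icc 0 ρ)) (z₀ : En n) (hz₀ : z₀ ∈ Metric.ball (0 : En n) ρ)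
    (hz₀0 : z₀ ≠ 0) (ψ : En n → ℝ) (hψ : ContDiff ℝ 1 ψ)
    (htouch₀ : ψ z₀ = f (ρ - ‖z₀‖))
    (htouch : ∀ᶠ z in nhds z₀, ψ z ≤ f (ρ - ‖z‖)) :
    (subDiff1 f ρ (ρ - ‖z₀‖)).Nonempty ∧
      ∃ α : ℝ, -α ∈ subDiff1 f ρ (ρ - ‖z₀‖) ∧
        gradient ψ z₀ = α • (‖z₀‖⁻¹ • z₀) := by
  have hz0 : (0:ℝ) < ‖z₀‖ := norm_pos_iff.mpr hz₀0
  have hzρ : ‖z₀‖ < ρ := by simpa [mem_ball, dist_eq_norm] using hz₀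
  set t₀ : ℝ := ρ - ‖z₀‖ with ht₀
  have ht₀pos : 0 < t₀ := by simp only [ht₀]; linarith
  have ht₀lt : t₀ < ρ := by simp only [ht₀]; linarith
  set u : En n := ‖z₀‖⁻¹ • z₀ with hu
  have hzu : z₀ = ‖z₀‖ • u := by
    rw [hu, smul_smul, mul_inv_cancel₀ (ne_of_gt hz0), one_smul]
  have hu1 : ‖u‖ = 1 := by
    rw [hu, norm_smul, norm_inv, Real.norm_eq_abs, abs_of_pos hz0,
      inv_mul_cancel₀ (ne_of_gt hz0)]
  have hψd : HasFDerivAt ψ (fderiv ℝ ψ z₀) z₀ :=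
    ((hψ.differentiable one_ne_zero) z₀).hasFDerivAt
  set g : En n := gradient ψ z₀ with hg
  have hgrad : ∀ y, fderiv ℝ ψ z₀ y = ⟪g, y⟫_ℝ := by
    intro y
    simp [hg, gradient, InnerProductSpace.toDual_symm_apply]
  set α : ℝ := ⟪g, u⟫_ℝ with hα
  -- Step A: tangential derivatives vanish
  have tangential : ∀ w : En n, ⟪w, z₀⟫_ℝ = 0 → ⟪g, w⟫_ℝ = 0 := by
    intro w hw
    rcases eq_or_ne w 0 with rfl | hw0
    · simp
    have hwn : (0:ℝ) < ‖w‖ := norm_pos_iff.mpr hw0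
    set w' : En n := (‖z₀‖ / ‖w‖) • w with hw'
    have hw'n : ‖w'‖ = ‖z₀‖ := by
      rw [hw', norm_smul, Real.norm_eq_abs, abs_of_pos (div_pos hz0 hwn),
        div_mul_cancel₀ _ (ne_of_gt hwn)]
    have hw'z : ⟪w', z₀⟫_ℝ = 0 := by
      rw [hw', real_inner_smul_left, hw, mul_zero]
    set c : ℝ → En n := fun θ => (Real.cos θ) • z₀ + (Real.sin θ) • w' with hc
    have hcnorm : ∀ θ, ‖c θ‖ = ‖z₀‖ := by
      intro θ
      have h1 : ‖c θ‖ ^ 2 = ‖z₀‖ ^ 2 := by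
        rw [hc]
        simp only
        rw [norm_add_sq_real, real_inner_smul_left, real_inner_smul_right,
          real_inner_comm w' z₀, hw'z, norm_smul, norm_smul, hw'n]
        simp [Real.norm_eq_abs, mul_pow, sq_abs]
        ring_nf
        rw [← sq_abs (Real.sin θ)]
        nlinarith [Real.sin_sq_add_cos_sq θ, sq_abs (Real.sin θ)]
      have := congrArg Real.sqrt h1
      rwa [Real.sqrt_sq (norm_nonneg _), Real.sqrt_sq (norm_nonneg _)] at this
    have hc0 : c 0 = z₀ := by simp [hc]
    have hccont : Continuous c := by
      fun_prop
    have hctend : Tendsto c (nhds 0) (nhds z₀) := by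
      simpa [hc0] using hccont.tendsto 0
    have hmax : IsLocalMax (fun θ => ψ (c θ)) 0 := by
      have := hctend.eventually htouch
      filter_upwards [this] with θ hθ
      have : ψ (c θ) ≤ f (ρ - ‖c θ‖) := hθ
      rw [hcnorm θ] at this
      simpa [hc0, htouch₀] using this
    have hcd : HasDerivAt c w' 0 := by
      have h1 : HasDerivAt (fun θ : ℝ => (Real.cos θ) • z₀) ((-Real.sin 0) • z₀) 0 :=
        (Real.hasDerivAt_cos 0).smul_const z₀
      have h2 : HasDerivAt (fun θ : ℝ => (Real.sin θ) • w') ((Real.cos 0) • w') 0 :=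
        (Real.hasDerivAt_sin 0).smul_const w'
      have := h1.add h2
      simp at this; exact this
    have hcomp : HasDerivAt (fun θ => ψ (c θ)) (fderiv ℝ ψ z₀ w') 0 := by
      have hψd' : HasFDerivAt ψ (fderiv ℝ ψ z₀) (c 0) := by rw [hc0]; exact hψd
      exact hψd'.comp_hasDerivAt 0 hcd
    have hzero : fderiv ℝ ψ z₀ w' = 0 := hmax.hasDerivAt_eq_zero hcomp
    rw [hgrad, hw', real_inner_smul_right] at hzero
    rcases mul_eq_zero.mp hzero with h | h
    · exact absurd h (ne_of_gt (div_pos hz0 hwn))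
    · exact h
  -- the gradient is radial
  have hradial : g = α • u := by
    set w : En n := g - α • u with hw
    have hwz : ⟪w, z₀⟫_ℝ = 0 := by
      have h2 : ⟪g, z₀⟫_ℝ = α * ‖z₀‖ := by
        rw [hα, hu, real_inner_smul_right]
        field_simp
      rw [hw, inner_sub_left, h2, real_inner_smul_left, hu,
        real_inner_smul_left, real_inner_self_eq_norm_sq]
      field_simp
      ring
    have h0 : ⟪g, w⟫_ℝ = 0 := tangential w hwz
    have hwu : ⟪w, u⟫_ℝ = 0 := by rw [hu, real_inner_smul_right, hwz, mul_zero]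
    have hww : ⟪w, w⟫_ℝ = 0 := by
      rw [hw] at h0 hwu ⊢
      rw [inner_sub_right, real_inner_smul_right, hwu, real_inner_comm, h0]
      ring
    have hw0 : w = 0 := inner_self_eq_zero (𝕜 := ℝ).mp hww
    have : g - α • u = 0 := by rw [← hw]; exact hw0
    have := sub_eq_zero.mp this
    simpa using this
  -- Step B: -α is a subgradient
  have hsub : -α ∈ subDiff1 f ρ t₀ := by
    intro ε hε
    set γ : ℝ → En n := fun s => (ρ - s) • u with hγ
    have hγt₀ : γ t₀ = z₀ := by
      show (ρ - t₀) • u = z₀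
      rw [show ρ - t₀ = ‖z₀‖ by simp only [ht₀]; ring, ← hzu]
    have hγdiff : ∀ s, γ s - z₀ = (t₀ - s) • u := by
      intro s
      rw [hγ, hzu]
      simp only [ht₀]
      rw [← sub_smul]
      ring_nf
    have hγnorm : ∀ s, ‖γ s - z₀‖ = |s - t₀| := by
      intro s
      rw [hγdiff, norm_smul, hu1, mul_one, Real.norm_eq_abs, abs_sub_comm]
    have hγcont : Continuous γ := by fun_prop
    have hγtend : Tendsto γ (nhdsWithin t₀ (Set.Icc 0 ρ)) (nhds z₀) := by
      have : Tendsto γ (nhds t₀) (nhds z₀) := by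
        simpa [hγt₀] using hγcont.tendsto t₀
      exact this.mono_left nhdsWithin_le_nhds
    -- little-o estimate
    have hlo := hψd.isLittleO.def hε
    have hlo2 := hγtend.eventually hlo
    have htch := hγtend.eventually htouch
    have hmem : ∀ᶠ s in nhdsWithin t₀ (Set.Icc 0 ρ), s ∈ Set.Icc 0 ρ :=
      eventually_mem_nhdsWithin
    filter_upwards [hlo2, htch, hmem] with s h1 h2 h3
    have hnγ : ‖γ s‖ = ρ - s := by
      rw [hγ, norm_smul, hu1, mul_one, Real.norm_eq_abs, abs_of_nonneg (by linarith [h3.2])]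
    have hfs : ψ (γ s) ≤ f s := by
      have := h2
      rwa [hnγ, show ρ - (ρ - s) = s by ring] at this
    have hft₀ : f t₀ = ψ z₀ := htouch₀.symm
    have hfd : fderiv ℝ ψ z₀ (γ s - z₀) = -α * (s - t₀) := by
      rw [hgrad, hγdiff, real_inner_smul_right, ← hα]
      ring
    have hbound : ‖ψ (γ s) - ψ z₀ - fderiv ℝ ψ z₀ (γ s - z₀)‖ ≤ ε * ‖γ s - z₀‖ := h1
    rw [hγnorm, hfd, Real.norm_eq_abs] at hbound
    have habs : -(ε * |s - t₀|) ≤ ψ (γ s) - ψ z₀ - (-α * (s - t₀)) := by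
      have := neg_abs_le (ψ (γ s) - ψ z₀ - (-α * (s - t₀)))
      linarith [hbound, this]
    have : ψ (γ s) - ψ z₀ - (-α * (s - t₀)) ≤ f s - f t₀ - (-α) * (s - t₀) := by
      rw [hft₀]; ring_nf; linarith
    linarith
  exact ⟨⟨-α, hsub⟩, α, hsub, hradial⟩
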